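/- For the Painlevé III equation with three zero parameters y'' = (y')²/y - y'/x + b/x, written as y'' = P + 3Qy' + 3Ry'² + Sy'³ with P = b/x, Q = -1/(3x), R = 1/(3y), S = 0 (b ≠ 0, x > 0, y ≠ 0), one has: A = -3P·R_y - 3R·P_y - 3Q·R_x + 6Q·Q_y + P_yy - 2Q_xy + R_xx + 2PS_x + SP_x = b/(xy²), B = 0, H = -A·A_y + 4A·B_x - 3PB² + 6QAB - 3RA² = b²/(x²y⁵), N = -H/(3A) = -b/(3xy³), and the pseudoinvariant M = (6/5)N·A_y - A·N_y - (12/5)A·N·R equals b²/(15x²y⁶); consequently I₁ = M/N² = 3/5. -/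

import Mathlib

noncomputable def pdx (f : ℝ → ℝ → ℝ) (x y : ℝ) : ℝ := deriv (fun t => f t y) x
noncomputable def pdy (f : ℝ → ℝ → ℝ) (x y : ℝ) : ℝ := deriv (fun t => f x t) y

/-- for PIII(0,b,0,0) with P = b/x, Q = -1/(3x), R = 1/(3y), S = 0, b ≠ 0:
A = b/(xy²), B = 0, H = b²/(x²y⁵), N = -b/(3xy³), M = b²/(15x²y⁶) and I₁ = M/N² = 3/5. -/
theorem stmt17 (b : ℝ) (hb : b ≠ 0) (P Q R S A B H N M : ℝ → ℝ → ℝ)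
    (hP : ∀ x y, P x y = b / x) (hQ : ∀ x y, Q x y = -1 / (3 * x))
    (hR : ∀ x y, R x y = 1 / (3 * y)) (hS : ∀ x y, S x y = 0)
    (hA : ∀ x y, A x y = -3 * P x y * pdy R x y - 3 * R x y * pdy P x y
      - 3 * Q x y * pdx R x y + 6 * Q x y * pdy Q x y + pdy (pdy P) x y
      - 2 * pdx (pdy Q) x y + pdx (pdx R) x y + 2 * P x y * pdx S x y + S x y * pdx P x y)
    (hB : ∀ x y, B x y = pdx (pdx S) x y - 2 * pdx (pdy R) x y + pdy (pdy Q) x y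
      - 2 * S x y * pdy P x y - P x y * pdy S x y + 3 * S x y * pdx Q x y
      + 3 * Q x y * pdx S x y + 3 * R x y * pdy Q x y - 6 * R x y * pdx R x y)
    (hH : ∀ x y, H x y = -A x y * pdy A x y + 4 * A x y * pdx B x y
      - 3 * P x y * (B x y) ^ 2 + 6 * Q x y * A x y * B x y - 3 * R x y * (A x y) ^ 2)
    (hN : ∀ x y, N x y = -H x y / (3 * A x y))
    (hM : ∀ x y, M x y = (6 / 5) * N x y * pdy A x y - A x y * pdy N x y
      - (12 / 5) * A x y * N x y * R x y) :
    ∀ x y : ℝ, 0 < x → y ≠ 0 →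
      A x y = b / (x * y ^ 2) ∧ B x y = 0 ∧
      H x y = b ^ 2 / (x ^ 2 * y ^ 5) ∧ N x y = -b / (3 * x * y ^ 3) ∧
      M x y = b ^ 2 / (15 * x ^ 2 * y ^ 6) ∧ M x y / (N x y) ^ 2 = 3 / 5 := by
  intro x y hx0 hy
  have hx : x ≠ 0 := ne_of_gt hx0
  -- first partials that vanish (constant functions)
  have hPy : ∀ u v : ℝ, pdy P u v = 0 := by
    intro u v
    have h : (fun t => P u t) = fun _ => b / u := funext (hP u)
    simp [pdy, h]
  have hQy : ∀ u v : ℝ, pdy Q u v = 0 := by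
    intro u v
    have h : (fun t => Q u t) = fun _ => -1 / (3 * u) := funext (hQ u)
    simp [pdy, h]
  have hSy : ∀ u v : ℝ, pdy S u v = 0 := by
    intro u v
    have h : (fun t => S u t) = fun _ => (0 : ℝ) := funext (hS u)
    simp [pdy, h]
  have hSx : ∀ u v : ℝ, pdx S u v = 0 := by
    intro u v
    have h : (fun t => S t v) = fun _ => (0 : ℝ) := funext (fun t => hS t v)
    simp [pdx, h]
  have hRx : ∀ u v : ℝ, pdx R u v = 0 := by
    intro u v
    have h : (fun t => R t v) = fun _ => 1 / (3 * v) := funext (fun t => hR t v)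
    simp [pdx, h]
  -- pdy R
  have hRy : ∀ u v : ℝ, v ≠ 0 → pdy R u v = -1 / (3 * v ^ 2) := by
    intro u v hv
    have h1 : (fun t => R u t) = fun t => 1 / (3 * t) := funext (hR u)
    have h3 : HasDerivAt (fun t : ℝ => 3 * t) 3 v := by
      simpa using (hasDerivAt_id v).const_mul (3 : ℝ)
    have h4 := h3.inv (mul_ne_zero three_ne_zero hv)
    have h5 : HasDerivAt (fun t : ℝ => 1 / (3 * t)) (-1 / (3 * v ^ 2)) v := by
      have he : (fun t : ℝ => 1 / (3 * t)) = fun t => (3 * t)⁻¹ := by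
        funext t; rw [one_div]
      rw [he]
      refine h4.congr_deriv ?_
      field_simp
    rw [pdy, h1, h5.deriv]
  -- second partials that vanish
  have hPyy : ∀ u v : ℝ, pdy (pdy P) u v = 0 := by
    intro u v
    have h : (fun t => pdy P u t) = fun _ => (0 : ℝ) := funext (hPy u)
    have h2 : pdy (pdy P) u v = deriv (fun t => pdy P u t) v := rfl
    rw [h2, h]; exact deriv_const _ _
  have hQyx : ∀ u v : ℝ, pdx (pdy Q) u v = 0 := by
    intro u v
    have h : (fun t => pdy Q t v) = fun _ => (0 : ℝ) := funext (fun t => hQy t v)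
    have h2 : pdx (pdy Q) u v = deriv (fun t => pdy Q t v) u := rfl
    rw [h2, h]; exact deriv_const _ _
  have hQyy : ∀ u v : ℝ, pdy (pdy Q) u v = 0 := by
    intro u v
    have h : (fun t => pdy Q u t) = fun _ => (0 : ℝ) := funext (hQy u)
    have h2 : pdy (pdy Q) u v = deriv (fun t => pdy Q u t) v := rfl
    rw [h2, h]; exact deriv_const _ _
  have hRxx : ∀ u v : ℝ, pdx (pdx R) u v = 0 := by
    intro u v
    have h : (fun t => pdx R t v) = fun _ => (0 : ℝ) := funext (fun t => hRx t v)
    have h2 : pdx (pdx R) u v = deriv (fun t => pdx R t v) u := rfl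
    rw [h2, h]; exact deriv_const _ _
  have hSxx : ∀ u v : ℝ, pdx (pdx S) u v = 0 := by
    intro u v
    have h : (fun t => pdx S t v) = fun _ => (0 : ℝ) := funext (fun t => hSx t v)
    have h2 : pdx (pdx S) u v = deriv (fun t => pdx S t v) u := rfl
    rw [h2, h]; exact deriv_const _ _
  have hRyx : ∀ u v : ℝ, pdx (pdy R) u v = 0 := by
    intro u v
    have h : (fun t => pdy R t v) = fun _ => deriv (fun s : ℝ => 1 / (3 * s)) v := by
      funext t
      rw [pdy, funext (hR t)]
    have h2 : pdx (pdy R) u v = deriv (fun t => pdy R t v) u := rfl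
    rw [h2, h]; exact deriv_const _ _
  -- value of A
  have hAval : ∀ u t : ℝ, u ≠ 0 → t ≠ 0 → A u t = b / (u * t ^ 2) := by
    intro u t hu ht
    rw [hA u t, hRy u t ht, hPy, hRx, hQy, hPyy, hQyx, hRxx, hSx, hS, hP]
    field_simp
    ring
  -- B vanishes identically
  have hBval : ∀ u t : ℝ, B u t = 0 := by
    intro u t
    rw [hB u t, hSxx, hRyx, hQyy, hPy, hSy, hSx, hQy, hRx, hS]
    ring
  have hBx : ∀ u v : ℝ, pdx B u v = 0 := by
    intro u v
    have h : (fun t => B t v) = fun _ => (0 : ℝ) := funext (fun t => hBval t v)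
    have h2 : pdx B u v = deriv (fun t => B t v) u := rfl
    rw [h2, h]; exact deriv_const _ _
  -- pdy A
  have hAy : ∀ t : ℝ, t ≠ 0 → pdy A x t = -2 * b / (x * t ^ 3) := by
    intro t ht
    have heq : (fun s => A x s) =ᶠ[nhds t] fun s => b / (x * s ^ 2) := by
      filter_upwards [isOpen_compl_singleton.mem_nhds
        (by simpa using ht : t ∈ ({0}ᶜ : Set ℝ))] with s hs
      exact hAval x s hx (by simpa using hs)
    have h1 : HasDerivAt (fun s : ℝ => s ^ 2) (2 * t) t := by
      simpa using hasDerivAt_pow 2 t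
    have h2 := (h1.inv (pow_ne_zero 2 ht)).const_mul (b / x)
    have hfe : (fun s : ℝ => b / (x * s ^ 2)) = fun s => b / x * (s ^ 2)⁻¹ := by
      funext s
      rw [div_eq_mul_inv, div_eq_mul_inv, mul_inv]
      ring
    have hd : HasDerivAt (fun s : ℝ => b / (x * s ^ 2)) (-2 * b / (x * t ^ 3)) t := by
      rw [hfe]
      refine h2.congr_deriv ?_
      field_simp
    rw [pdy, heq.deriv_eq, hd.deriv]
  -- value of H
  have hHval : ∀ t : ℝ, t ≠ 0 → H x t = b ^ 2 / (x ^ 2 * t ^ 5) := by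
    intro t ht
    rw [hH x t, hBval, hBx, hAval x t hx ht, hAy t ht, hR]
    field_simp
    ring
  -- value of N
  have hNval : ∀ t : ℝ, t ≠ 0 → N x t = -b / (3 * x * t ^ 3) := by
    intro t ht
    rw [hN x t, hHval t ht, hAval x t hx ht]
    rw [div_eq_div_iff (by simp [hb, hx, ht] : 3 * (b / (x * t ^ 2)) ≠ 0)
      (by simp [hx, ht] : 3 * x * t ^ 3 ≠ 0)]
    field_simp
  -- pdy N
  have hNy : pdy N x y = b / (x * y ^ 4) := by
    have heq : (fun s => N x s) =ᶠ[nhds y] fun s => -b / (3 * x * s ^ 3) := by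
      filter_upwards [isOpen_compl_singleton.mem_nhds
        (by simpa using hy : y ∈ ({0}ᶜ : Set ℝ))] with s hs
      exact hNval s (by simpa using hs)
    have h1 : HasDerivAt (fun s : ℝ => s ^ 3) (3 * y ^ 2) y := by
      simpa using hasDerivAt_pow 3 y
    have h2 := (h1.inv (pow_ne_zero 3 hy)).const_mul (-b / (3 * x))
    have hfe : (fun s : ℝ => -b / (3 * x * s ^ 3)) = fun s => -b / (3 * x) * (s ^ 3)⁻¹ := by
      funext s
      rw [div_eq_mul_inv, div_eq_mul_inv, mul_inv]
      ring
    have hd : HasDerivAt (fun s : ℝ => -b / (3 * x * s ^ 3)) (b / (x * y ^ 4)) y := by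
      rw [hfe]
      refine h2.congr_deriv ?_
      field_simp
    rw [pdy, heq.deriv_eq, hd.deriv]
  have hMval : M x y = b ^ 2 / (15 * x ^ 2 * y ^ 6) := by
    rw [hM x y, hNval y hy, hAy y hy, hAval x y hx hy, hNy, hR]
    field_simp
    ring
  refine ⟨hAval x y hx hy, hBval x y, hHval y hy, hNval y hy, hMval, ?_⟩
  rw [hMval, hNval y hy]
  field_simp
  ring
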